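/- Let ν, λ ∈ ℝ, κ < 1 and γ > −1 be fixed with ν + λ ≥ 0 and γ + 1 + ν − κ ≥ 0, and assume it is not the case that both ν + λ = 0 and γ + 1 + ν − κ = 0. Then there exists a constant C such that for all φ ∈ (0,π): φ^ν ∫₀^{π/4} (φ/(θ+φ))^λ θ^γ |θ−φ|^{−κ} dθ ≤ C. -/

import Mathlib

open MeasureTheory Real Set

noncomputable section

private lemma aux_ratio {c x K : ℝ} (r : ℝ) (hc : 0 < c) (hK : 1 ≤ K)
    (h1 : c / K ≤ x) (h2 : x ≤ K * c) : x ^ r ≤ K ^ |r| * c ^ r := by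
  have hK0 : 0 < K := lt_of_lt_of_le one_pos hK
  have hx0 : 0 < x := lt_of_lt_of_le (div_pos hc hK0) h1
  rcases le_or_gt 0 r with hr | hr
  · calc x ^ r ≤ (K * c) ^ r := Real.rpow_le_rpow hx0.le h2 hr
      _ = K ^ r * c ^ r := Real.mul_rpow hK0.le hc.le
      _ ≤ K ^ |r| * c ^ r :=
        mul_le_mul_of_nonneg_right (Real.rpow_le_rpow_of_exponent_le hK (le_abs_self r))
          (Real.rpow_nonneg hc.le r)
  · calc x ^ r ≤ (c / K) ^ r := Real.rpow_le_rpow_of_nonpos (div_pos hc hK0) h1 hr.le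
      _ = c ^ r / K ^ r := Real.div_rpow hc.le hK0.le r
      _ = K ^ (-r) * c ^ r := by
          rw [Real.rpow_neg hK0.le]; rw [div_eq_mul_inv]; ring
      _ = K ^ |r| * c ^ r := by rw [abs_of_neg hr]

private lemma aux_phi_pow {φ t : ℝ} (hφ : 0 < φ) (hφπ : φ < π) (ht : 0 ≤ t) :
    φ ^ t ≤ max 1 (π ^ t) := by
  rcases le_or_gt φ 1 with h | h
  · exact le_max_of_le_left (Real.rpow_le_one hφ.le h ht)
  · exact le_max_of_le_right (Real.rpow_le_rpow hφ.le hφπ.le ht)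

private lemma kernel_int {φ κ : ℝ} (hφ : 0 < φ) (hκ : κ < 1) :
    IntegrableOn (fun θ : ℝ => |θ - φ| ^ (-κ)) (Ioc (φ/2) (2*φ)) volume := by
  have hbase : IntervalIntegrable (fun x : ℝ => x ^ (-κ)) volume 0 (φ/2) :=
    intervalIntegral.intervalIntegrable_rpow' (by linarith)
  have hbase2 : IntervalIntegrable (fun x : ℝ => x ^ (-κ)) volume 0 φ :=
    intervalIntegral.intervalIntegrable_rpow' (by linarith)
  have hleft : IntervalIntegrable (fun θ : ℝ => (φ - θ) ^ (-κ)) volume (φ - (φ/2)) (φ - 0) :=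
    (hbase.comp_sub_left φ).symm
  rw [show φ - φ/2 = φ/2 by ring, sub_zero] at hleft
  have hright : IntervalIntegrable (fun θ : ℝ => (θ - φ) ^ (-κ)) volume (0 + φ) (φ + φ) :=
    hbase2.comp_sub_right φ
  rw [zero_add, show φ + φ = 2*φ by ring] at hright
  have hleftOn : IntegrableOn (fun θ : ℝ => |θ - φ| ^ (-κ)) (Ioc (φ/2) φ) volume := by
    refine ((intervalIntegrable_iff_integrableOn_Ioc_of_le (by linarith)).1 hleft).congr_fun
      (fun θ hθ => ?_) measurableSet_Ioc
    rw [abs_sub_comm, abs_of_nonneg (by linarith [hθ.2] : (0:ℝ) ≤ φ - θ)]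
  have hrightOn : IntegrableOn (fun θ : ℝ => |θ - φ| ^ (-κ)) (Ioc φ (2*φ)) volume := by
    refine ((intervalIntegrable_iff_integrableOn_Ioc_of_le (by linarith)).1 hright).congr_fun
      (fun θ hθ => ?_) measurableSet_Ioc
    rw [abs_of_nonneg (by linarith [hθ.1] : (0:ℝ) ≤ θ - φ)]
  have := hleftOn.union hrightOn
  rwa [Ioc_union_Ioc_eq_Ioc (by linarith) (by linarith)] at this

private lemma kernel_integral_le {φ κ : ℝ} (hφ : 0 < φ) (hκ : κ < 1) :
    ∫ θ in Ioc (φ/2) (2*φ), |θ - φ| ^ (-κ) ≤ 2 * φ ^ (1-κ) / (1-κ) := by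
  have hκ0 : (0:ℝ) < 1 - κ := by linarith
  have hbase : IntervalIntegrable (fun x : ℝ => x ^ (-κ)) volume 0 (φ/2) :=
    intervalIntegral.intervalIntegrable_rpow' (by linarith)
  have hbase2 : IntervalIntegrable (fun x : ℝ => x ^ (-κ)) volume 0 φ :=
    intervalIntegral.intervalIntegrable_rpow' (by linarith)
  have hleft : IntervalIntegrable (fun θ : ℝ => (φ - θ) ^ (-κ)) volume (φ - (φ/2)) (φ - 0) :=
    (hbase.comp_sub_left φ).symm
  rw [show φ - φ/2 = φ/2 by ring, sub_zero] at hleft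
  have hright : IntervalIntegrable (fun θ : ℝ => (θ - φ) ^ (-κ)) volume (0 + φ) (φ + φ) :=
    hbase2.comp_sub_right φ
  rw [zero_add, show φ + φ = 2*φ by ring] at hright
  have hleftOn : IntegrableOn (fun θ : ℝ => |θ - φ| ^ (-κ)) (Ioc (φ/2) φ) volume := by
    refine ((intervalIntegrable_iff_integrableOn_Ioc_of_le (by linarith)).1 hleft).congr_fun
      (fun θ hθ => ?_) measurableSet_Ioc
    rw [abs_sub_comm, abs_of_nonneg (by linarith [hθ.2] : (0:ℝ) ≤ φ - θ)]
  have hrightOn : IntegrableOn (fun θ : ℝ => |θ - φ| ^ (-κ)) (Ioc φ (2*φ)) volume := by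
    refine ((intervalIntegrable_iff_integrableOn_Ioc_of_le (by linarith)).1 hright).congr_fun
      (fun θ hθ => ?_) measurableSet_Ioc
    rw [abs_of_nonneg (by linarith [hθ.1] : (0:ℝ) ≤ θ - φ)]
  rw [← Ioc_union_Ioc_eq_Ioc (by linarith : φ/2 ≤ φ) (by linarith : φ ≤ 2*φ)]
  rw [setIntegral_union (Ioc_disjoint_Ioc_of_le le_rfl) measurableSet_Ioc hleftOn hrightOn]
  have hL : ∫ θ in Ioc (φ/2) φ, |θ - φ| ^ (-κ) = (φ/2) ^ (1-κ) / (1-κ) := by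
    rw [setIntegral_congr_fun measurableSet_Ioc
      (fun θ hθ => by rw [abs_sub_comm, abs_of_nonneg (by linarith [hθ.2] : (0:ℝ) ≤ φ - θ)])]
    rw [← intervalIntegral.integral_of_le (by linarith : φ/2 ≤ φ)]
    rw [intervalIntegral.integral_comp_sub_left (fun x : ℝ => x ^ (-κ)) φ]
    rw [show φ - φ = 0 by ring, show φ - φ/2 = φ/2 by ring]
    rw [integral_rpow (Or.inl (by linarith : (-1:ℝ) < -κ))]
    rw [show -κ + 1 = 1 - κ by ring, Real.zero_rpow (by linarith : (1:ℝ) - κ ≠ 0)]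
    ring
  have hR : ∫ θ in Ioc φ (2*φ), |θ - φ| ^ (-κ) = φ ^ (1-κ) / (1-κ) := by
    rw [setIntegral_congr_fun measurableSet_Ioc
      (fun θ hθ => by rw [abs_of_nonneg (by linarith [hθ.1] : (0:ℝ) ≤ θ - φ)])]
    rw [← intervalIntegral.integral_of_le (by linarith : φ ≤ 2*φ)]
    rw [intervalIntegral.integral_comp_sub_right (fun x : ℝ => x ^ (-κ)) φ]
    rw [show φ - φ = 0 by ring, show 2*φ - φ = φ by ring]
    rw [integral_rpow (Or.inl (by linarith : (-1:ℝ) < -κ))]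
    rw [show -κ + 1 = 1 - κ by ring, Real.zero_rpow (by linarith : (1:ℝ) - κ ≠ 0)]
    ring
  rw [hL, hR]
  have : (φ/2) ^ (1-κ) ≤ φ ^ (1-κ) :=
    Real.rpow_le_rpow (by positivity) (by linarith) hκ0.le
  rw [← add_div, div_le_div_iff₀ hκ0 hκ0]
  nlinarith [Real.rpow_nonneg (le_of_lt hφ) (1-κ)]

private lemma tail_bound (a e : ℝ) (ha : 0 ≤ a) (hae : 0 ≤ a + e)
    (hne : ¬(a = 0 ∧ a + e = 0)) :
    ∃ C₃ : ℝ, 0 ≤ C₃ ∧ ∀ φ : ℝ, 0 < φ → φ < π → 2*φ < π/4 →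
      φ ^ a * ∫ θ in Ioc (2*φ) (π/4), θ ^ (e-1) ≤ C₃ := by
  have hπ : 0 < π := Real.pi_pos
  rcases lt_trichotomy e 0 with he0 | he0 | he0
  · refine ⟨max 1 (π ^ (a+e)) / (-e),
      div_nonneg (le_trans zero_le_one (le_max_left _ _)) (by linarith), fun φ hφ0 hφπ h24 => ?_⟩
    have h2φ : 0 < 2*φ := by linarith
    have hval : ∫ θ in Ioc (2*φ) (π/4), θ ^ (e-1)
        = ((π/4) ^ e - (2*φ) ^ e) / e := by
      rw [← intervalIntegral.integral_of_le h24.le]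
      rw [integral_rpow (Or.inr ⟨by intro h; exact absurd h (by linarith),
        by rw [Set.uIcc_of_le h24.le]; rintro ⟨h1, -⟩; linarith⟩)]
      rw [show e - 1 + 1 = e by ring]
    rw [hval]
    have hstep : ((π/4) ^ e - (2*φ) ^ e) / e ≤ (2*φ) ^ e / (-e) := by
      rw [show ((π/4) ^ e - (2*φ) ^ e) / e = ((2*φ) ^ e - (π/4) ^ e) / (-e) by
        rw [div_neg, ← neg_div, neg_sub]]
      exact (div_le_div_iff_of_pos_right (by linarith : (0:ℝ) < -e)).2
        (by linarith [Real.rpow_nonneg (by positivity : (0:ℝ) ≤ π/4) e])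
    calc φ ^ a * (((π/4) ^ e - (2*φ) ^ e) / e)
        ≤ φ ^ a * ((2*φ) ^ e / (-e)) :=
          mul_le_mul_of_nonneg_left hstep (Real.rpow_nonneg hφ0.le a)
      _ = (2:ℝ) ^ e * φ ^ (a+e) / (-e) := by
          rw [Real.mul_rpow (by norm_num) hφ0.le, Real.rpow_add hφ0]; ring
      _ ≤ 1 * (max 1 (π ^ (a+e))) / (-e) := by
          apply div_le_div_of_nonneg_right ?_ (by linarith)
          exact mul_le_mul (Real.rpow_le_one_of_one_le_of_nonpos one_le_two he0.le)
            (aux_phi_pow hφ0 hφπ hae) (Real.rpow_nonneg hφ0.le _) zero_le_one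
      _ = max 1 (π ^ (a+e)) / (-e) := by ring
  · have ha' : 0 < a := by
      rcases ha.lt_or_eq with h | h
      · exact h
      · exact absurd ⟨h.symm, by rw [← h]; linarith⟩ hne
    refine ⟨1 / a, by positivity, fun φ hφ0 hφπ h24 => ?_⟩
    have h2φ : 0 < 2*φ := by linarith
    have hval : ∫ θ in Ioc (2*φ) (π/4), θ ^ (e-1) = Real.log ((π/4) / (2*φ)) := by
      rw [setIntegral_congr_fun measurableSet_Ioc
        (fun θ hθ => by rw [he0, zero_sub, Real.rpow_neg_one])]
      rw [← intervalIntegral.integral_of_le h24.le]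
      exact integral_inv (by rw [Set.uIcc_of_le h24.le]; rintro ⟨h1, -⟩; linarith)
    rw [hval]
    have hlog1 : Real.log ((π/4) / (2*φ)) ≤ Real.log φ⁻¹ := by
      apply Real.log_le_log (by positivity)
      rw [div_le_iff₀ h2φ]
      have h2 : φ⁻¹ * (2*φ) = 2 := by field_simp
      rw [h2]; linarith [Real.pi_le_four]
    calc φ ^ a * Real.log ((π/4) / (2*φ))
        ≤ φ ^ a * Real.log φ⁻¹ :=
          mul_le_mul_of_nonneg_left hlog1 (Real.rpow_nonneg hφ0.le a)
      _ ≤ φ ^ a * (φ⁻¹ ^ a / a) :=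
          mul_le_mul_of_nonneg_left (Real.log_le_rpow_div (by positivity) ha')
            (Real.rpow_nonneg hφ0.le a)
      _ = 1 / a := by
          rw [Real.inv_rpow hφ0.le, ← mul_div_assoc,
            mul_inv_cancel₀ (ne_of_gt (Real.rpow_pos_of_pos hφ0 a))]
  · refine ⟨max 1 (π ^ a) * (1 / e), by positivity, fun φ hφ0 hφπ h24 => ?_⟩
    have h2φ : 0 < 2*φ := by linarith
    have hval : ∫ θ in Ioc (2*φ) (π/4), θ ^ (e-1)
        = ((π/4) ^ e - (2*φ) ^ e) / e := by
      rw [← intervalIntegral.integral_of_le h24.le]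
      rw [integral_rpow (Or.inr ⟨by intro h; exact absurd h (by linarith),
        by rw [Set.uIcc_of_le h24.le]; rintro ⟨h1, -⟩; linarith⟩)]
      rw [show e - 1 + 1 = e by ring]
    rw [hval]
    have hint_nonneg : 0 ≤ ((π/4) ^ e - (2*φ) ^ e) / e := by
      apply div_nonneg ?_ he0.le
      have : (2*φ) ^ e ≤ (π/4) ^ e := Real.rpow_le_rpow h2φ.le h24.le he0.le
      linarith
    have hint_le : ((π/4) ^ e - (2*φ) ^ e) / e ≤ 1 / e := by
      apply div_le_div_of_nonneg_right ?_ he0.le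
      have h1 : (π/4 : ℝ) ^ e ≤ 1 :=
        Real.rpow_le_one (by positivity) (by linarith [Real.pi_le_four]) he0.le
      have h2 : 0 ≤ (2*φ) ^ e := Real.rpow_nonneg h2φ.le e
      linarith
    exact mul_le_mul (aux_phi_pow hφ0 hφπ ha) hint_le hint_nonneg (by positivity)


/-- a uniform bound for the integral
`φ^ν ∫₀^{π/4} (φ/(θ+φ))^λ θ^γ |θ−φ|^{−κ} dθ`, `φ ∈ (0,π)`. -/
theorem weighted_interval_integral_uniform_bound
    (ν lam κ γ : ℝ) (hκ : κ < 1) (hγ : -1 < γ)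
    (h₁ : 0 ≤ ν + lam) (h₂ : 0 ≤ γ + 1 + ν - κ)
    (h₃ : ¬ (ν + lam = 0 ∧ γ + 1 + ν - κ = 0)) :
    ∃ C : ℝ, ∀ φ ∈ Set.Ioo 0 π,
      φ ^ ν * ∫ θ in Set.Ioo 0 (π/4),
        (φ / (θ + φ)) ^ lam * θ ^ γ * |θ - φ| ^ (-κ) ≤ C := by
  have hπ : 0 < π := Real.pi_pos
  have hγ1 : (0:ℝ) < γ + 1 := by linarith
  have h1κ : (0:ℝ) < 1 - κ := by linarith
  obtain ⟨C₃, hC₃0, hC₃⟩ := tail_bound (ν + lam) (γ + 1 - lam - κ) h₁ (by linarith)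
    (by rintro ⟨hA, hB⟩; exact h₃ ⟨hA, by linarith⟩)
  set M : ℝ := max 1 (π ^ (γ + 1 + ν - κ)) with hMdef
  have hM0 : (0:ℝ) ≤ M := le_trans zero_le_one (le_max_left _ _)
  have hK₁0 : (0:ℝ) ≤ 2 ^ |lam| * 2 ^ |κ| := by positivity
  have hK₂0 : (0:ℝ) ≤ 3 ^ |lam| * 2 ^ |γ| := by positivity
  refine ⟨2 ^ |lam| * 2 ^ |κ| * M / (γ + 1) + 2 * (3 ^ |lam| * 2 ^ |γ|) * M / (1 - κ)
    + 2 ^ |lam| * 2 ^ |κ| * C₃, ?_⟩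
  rintro φ ⟨hφ0, hφπ⟩
  set T : Set ℝ := Ioo 0 (π/4) with hTdef
  set S1 : Set ℝ := Ioc 0 (φ/2) with hS1def
  set S2 : Set ℝ := Ioo (φ/2) (2*φ) with hS2def
  set S3 : Set ℝ := Ico (2*φ) (π/4) with hS3def
  set CA : ℝ := 2 ^ |lam| * 2 ^ |κ| * φ ^ (ν - κ) with hCAdef
  set CB : ℝ := 3 ^ |lam| * 2 ^ |γ| * φ ^ (ν + γ) with hCBdef
  set CC : ℝ := 2 ^ |lam| * 2 ^ |κ| * φ ^ (ν + lam) with hCCdef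
  have hCA0 : 0 ≤ CA := by positivity
  have hCB0 : 0 ≤ CB := by positivity
  have hCC0 : 0 ≤ CC := by positivity
  set G1 : ℝ → ℝ := fun θ => CA * θ ^ γ with hG1def
  set G2 : ℝ → ℝ := fun θ => CB * |θ - φ| ^ (-κ) with hG2def
  set G3 : ℝ → ℝ := fun θ => CC * θ ^ (γ - lam - κ) with hG3def
  -- integrability of the three model functions
  have hint1 : IntegrableOn G1 S1 volume := by
    have : IntegrableOn (fun θ : ℝ => θ ^ γ) S1 volume :=
      (intervalIntegrable_iff_integrableOn_Ioc_of_le (by positivity)).1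
        (intervalIntegral.intervalIntegrable_rpow' hγ)
    exact this.const_mul CA
  have hint2 : IntegrableOn G2 S2 volume :=
    (((kernel_int hφ0 hκ).mono_set Ioo_subset_Ioc_self)).const_mul CB
  have hint3 : IntegrableOn G3 S3 volume := by
    have hcont : ContinuousOn (fun θ : ℝ => θ ^ (γ - lam - κ)) (Icc (2*φ) (π/4)) := by
      apply ContinuousOn.rpow_const continuousOn_id
      intro x hx
      exact Or.inl (ne_of_gt (lt_of_lt_of_le (by linarith) hx.1))
    exact ((hcont.integrableOn_Icc).mono_set Ico_subset_Icc_self).const_mul CC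
  have e1 : Integrable (S1.indicator G1) (volume.restrict T) :=
    (hint1.integrable_indicator measurableSet_Ioc).restrict
  have e2 : Integrable (S2.indicator G2) (volume.restrict T) :=
    (hint2.integrable_indicator measurableSet_Ioo).restrict
  have e3 : Integrable (S3.indicator G3) (volume.restrict T) :=
    (hint3.integrable_indicator measurableSet_Ico).restrict
  -- pointwise comparison
  have hcomp : ∀ θ ∈ T, φ ^ ν * ((φ / (θ + φ)) ^ lam * θ ^ γ * |θ - φ| ^ (-κ))
      ≤ S1.indicator G1 θ + S2.indicator G2 θ + S3.indicator G3 θ := by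
    rintro θ ⟨hθ0, hθπ4⟩
    have hθφ : 0 < θ + φ := by linarith
    have hrw : φ ^ ν * ((φ / (θ + φ)) ^ lam * θ ^ γ * |θ - φ| ^ (-κ))
        = φ ^ (ν + lam) * ((θ + φ) ^ (-lam) * (θ ^ γ * |θ - φ| ^ (-κ))) := by
      rw [Real.div_rpow hφ0.le hθφ.le, Real.rpow_neg hθφ.le, Real.rpow_add hφ0]
      ring
    rw [hrw]
    rcases le_or_gt θ (φ/2) with hA | hA
    · have hmem : θ ∈ S1 := ⟨hθ0, hA⟩
      have hnotB : θ ∉ S2 := fun h => absurd h.1 (not_lt.2 hA)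
      have hnotC : θ ∉ S3 := fun h => absurd h.1 (not_le.2 (by linarith))
      rw [Set.indicator_of_mem hmem, Set.indicator_of_notMem hnotB,
        Set.indicator_of_notMem hnotC, add_zero, add_zero]
      have b1 : (θ + φ) ^ (-lam) ≤ 2 ^ |lam| * φ ^ (-lam) := by
        have := aux_ratio (c := φ) (x := θ + φ) (K := 2) (-lam) hφ0 one_le_two
          (by linarith) (by linarith)
        rwa [abs_neg] at this
      have b2 : |θ - φ| ^ (-κ) ≤ 2 ^ |κ| * φ ^ (-κ) := by
        have habs : |θ - φ| = φ - θ := by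
          rw [abs_sub_comm]; exact abs_of_nonneg (by linarith)
        rw [habs]
        have := aux_ratio (c := φ) (x := φ - θ) (K := 2) (-κ) hφ0 one_le_two
          (by linarith) (by linarith)
        rwa [abs_neg] at this
      calc φ ^ (ν + lam) * ((θ + φ) ^ (-lam) * (θ ^ γ * |θ - φ| ^ (-κ)))
          ≤ φ ^ (ν + lam) * ((2 ^ |lam| * φ ^ (-lam)) * (θ ^ γ * (2 ^ |κ| * φ ^ (-κ)))) := by
            gcongr <;> first | exact b1 | exact b2 | positivity
        _ = G1 θ := by
            rw [hG1def]
            show _ = CA * θ ^ γ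
            rw [hCAdef, show φ ^ (ν + lam) * ((2 ^ |lam| * φ ^ (-lam)) * (θ ^ γ * (2 ^ |κ| * φ ^ (-κ))))
              = 2 ^ |lam| * 2 ^ |κ| * (φ ^ (ν + lam) * φ ^ (-lam) * φ ^ (-κ)) * θ ^ γ by ring,
              ← Real.rpow_add hφ0, ← Real.rpow_add hφ0,
              show ν + lam + -lam + -κ = ν - κ by ring, mul_assoc]
    · rcases lt_or_ge θ (2*φ) with hB | hC
      · have hmem : θ ∈ S2 := ⟨hA, hB⟩
        have hnotA : θ ∉ S1 := fun h => absurd h.2 (not_le.2 hA)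
        have hnotC : θ ∉ S3 := fun h => absurd h.1 (not_le.2 hB)
        rw [Set.indicator_of_mem hmem, Set.indicator_of_notMem hnotA,
          Set.indicator_of_notMem hnotC, add_zero, zero_add]
        have b1 : (θ + φ) ^ (-lam) ≤ 3 ^ |lam| * φ ^ (-lam) := by
          have := aux_ratio (c := φ) (x := θ + φ) (K := 3) (-lam) hφ0
            (by norm_num : (1:ℝ) ≤ 3) (by linarith) (by linarith)
          rwa [abs_neg] at this
        have b2 : θ ^ γ ≤ 2 ^ |γ| * φ ^ γ :=
          aux_ratio (c := φ) (x := θ) (K := 2) γ hφ0 one_le_two (by linarith) (by linarith)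
        calc φ ^ (ν + lam) * ((θ + φ) ^ (-lam) * (θ ^ γ * |θ - φ| ^ (-κ)))
            ≤ φ ^ (ν + lam) * ((3 ^ |lam| * φ ^ (-lam)) * ((2 ^ |γ| * φ ^ γ) * |θ - φ| ^ (-κ))) := by
              gcongr <;> first | exact b1 | exact b2 | positivity
          _ = G2 θ := by
              rw [hG2def]
              show _ = CB * |θ - φ| ^ (-κ)
              rw [hCBdef, show φ ^ (ν + lam) * ((3 ^ |lam| * φ ^ (-lam)) * ((2 ^ |γ| * φ ^ γ) * |θ - φ| ^ (-κ)))
                = 3 ^ |lam| * 2 ^ |γ| * (φ ^ (ν + lam) * φ ^ (-lam) * φ ^ γ) * |θ - φ| ^ (-κ) by ring,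
                ← Real.rpow_add hφ0, ← Real.rpow_add hφ0,
                show ν + lam + -lam + γ = ν + γ by ring, mul_assoc]
      · have hmem : θ ∈ S3 := ⟨hC, hθπ4⟩
        have hnotA : θ ∉ S1 := fun h => absurd h.2 (not_le.2 (by linarith))
        have hnotB : θ ∉ S2 := fun h => absurd h.2 (not_lt.2 hC)
        rw [Set.indicator_of_mem hmem, Set.indicator_of_notMem hnotA,
          Set.indicator_of_notMem hnotB, add_zero, zero_add]
        have b1 : (θ + φ) ^ (-lam) ≤ 2 ^ |lam| * θ ^ (-lam) := by
          have := aux_ratio (c := θ) (x := θ + φ) (K := 2) (-lam) hθ0 one_le_two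
            (by linarith) (by linarith)
          rwa [abs_neg] at this
        have b2 : |θ - φ| ^ (-κ) ≤ 2 ^ |κ| * θ ^ (-κ) := by
          have habs : |θ - φ| = θ - φ := abs_of_nonneg (by linarith)
          rw [habs]
          have := aux_ratio (c := θ) (x := θ - φ) (K := 2) (-κ) hθ0 one_le_two
            (by linarith) (by linarith)
          rwa [abs_neg] at this
        calc φ ^ (ν + lam) * ((θ + φ) ^ (-lam) * (θ ^ γ * |θ - φ| ^ (-κ)))
            ≤ φ ^ (ν + lam) * ((2 ^ |lam| * θ ^ (-lam)) * (θ ^ γ * (2 ^ |κ| * θ ^ (-κ)))) := by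
              gcongr <;> first | exact b1 | exact b2 | positivity
          _ = G3 θ := by
              rw [hG3def]
              show _ = CC * θ ^ (γ - lam - κ)
              rw [hCCdef, show φ ^ (ν + lam) * ((2 ^ |lam| * θ ^ (-lam)) * (θ ^ γ * (2 ^ |κ| * θ ^ (-κ))))
                = 2 ^ |lam| * 2 ^ |κ| * φ ^ (ν + lam) * (θ ^ (-lam) * θ ^ γ * θ ^ (-κ)) by ring,
                ← Real.rpow_add hθ0, ← Real.rpow_add hθ0,
                show -lam + γ + -κ = γ - lam - κ by ring]
  have hnn : 0 ≤ᵐ[volume.restrict T]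
      fun θ => φ ^ ν * ((φ / (θ + φ)) ^ lam * θ ^ γ * |θ - φ| ^ (-κ)) := by
    refine ae_restrict_of_forall_mem measurableSet_Ioo fun θ hθ => ?_
    have hθ0 : (0:ℝ) < θ := hθ.1
    have hθφ : (0:ℝ) < θ + φ := by linarith
    have : (0:ℝ) ≤ φ / (θ + φ) := by positivity
    exact mul_nonneg (Real.rpow_nonneg hφ0.le ν)
      (mul_nonneg (mul_nonneg (Real.rpow_nonneg this lam) (Real.rpow_nonneg hθ0.le γ))
        (Real.rpow_nonneg (abs_nonneg _) _))
  -- the three term bounds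
  have hT1 : ∫ θ in T, S1.indicator G1 θ ≤ 2 ^ |lam| * 2 ^ |κ| * M / (γ + 1) := by
    rw [integral_indicator measurableSet_Ioc, Measure.restrict_restrict measurableSet_Ioc]
    have hmono : ∫ θ in S1 ∩ T, G1 θ ≤ ∫ θ in S1, G1 θ := by
      refine setIntegral_mono_set hint1 ?_ (HasSubset.Subset.eventuallyLE inter_subset_left)
      exact ae_restrict_of_forall_mem measurableSet_Ioc fun θ hθ =>
        mul_nonneg hCA0 (Real.rpow_nonneg hθ.1.le γ)
    refine hmono.trans ?_
    have hval : ∫ θ in S1, θ ^ γ = (φ/2) ^ (γ+1) / (γ+1) := by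
      rw [hS1def, ← intervalIntegral.integral_of_le (by positivity : (0:ℝ) ≤ φ/2),
        integral_rpow (Or.inl hγ), Real.zero_rpow (ne_of_gt hγ1)]
      ring
    rw [hG1def]
    rw [MeasureTheory.integral_const_mul, hval]
    calc CA * ((φ/2) ^ (γ+1) / (γ+1)) ≤ CA * (φ ^ (γ+1) / (γ+1)) := by
          apply mul_le_mul_of_nonneg_left ?_ hCA0
          apply div_le_div_of_nonneg_right ?_ hγ1.le
          exact Real.rpow_le_rpow (by positivity) (by linarith) hγ1.le
      _ = 2 ^ |lam| * 2 ^ |κ| * (φ ^ (ν - κ) * φ ^ (γ+1)) / (γ+1) := by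
          rw [hCAdef]; ring
      _ = 2 ^ |lam| * 2 ^ |κ| * φ ^ (γ + 1 + ν - κ) / (γ+1) := by
          rw [← Real.rpow_add hφ0, show ν - κ + (γ+1) = γ + 1 + ν - κ by ring]
      _ ≤ 2 ^ |lam| * 2 ^ |κ| * M / (γ+1) := by
          apply div_le_div_of_nonneg_right ?_ hγ1.le
          exact mul_le_mul_of_nonneg_left (aux_phi_pow hφ0 hφπ h₂) hK₁0
  have hT2 : ∫ θ in T, S2.indicator G2 θ ≤ 2 * (3 ^ |lam| * 2 ^ |γ|) * M / (1 - κ) := by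
    rw [integral_indicator measurableSet_Ioo, Measure.restrict_restrict measurableSet_Ioo]
    have hmono : ∫ θ in S2 ∩ T, G2 θ ≤ ∫ θ in S2, G2 θ := by
      refine setIntegral_mono_set hint2 ?_ (HasSubset.Subset.eventuallyLE inter_subset_left)
      exact Filter.Eventually.of_forall fun θ =>
        mul_nonneg hCB0 (Real.rpow_nonneg (abs_nonneg _) _)
    refine hmono.trans ?_
    rw [hG2def, MeasureTheory.integral_const_mul]
    have hIoo : ∫ θ in S2, |θ - φ| ^ (-κ) ≤ 2 * φ ^ (1-κ) / (1-κ) := by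
      rw [hS2def, ← MeasureTheory.integral_Ioc_eq_integral_Ioo]
      exact kernel_integral_le hφ0 hκ
    calc CB * ∫ θ in S2, |θ - φ| ^ (-κ) ≤ CB * (2 * φ ^ (1-κ) / (1-κ)) := by
          apply mul_le_mul_of_nonneg_left hIoo hCB0
      _ = 2 * (3 ^ |lam| * 2 ^ |γ|) * (φ ^ (ν+γ) * φ ^ (1-κ)) / (1-κ) := by
          rw [hCBdef]; ring
      _ = 2 * (3 ^ |lam| * 2 ^ |γ|) * φ ^ (γ + 1 + ν - κ) / (1-κ) := by
          rw [← Real.rpow_add hφ0, show ν + γ + (1-κ) = γ + 1 + ν - κ by ring]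
      _ ≤ 2 * (3 ^ |lam| * 2 ^ |γ|) * M / (1-κ) := by
          apply div_le_div_of_nonneg_right ?_ h1κ.le
          exact mul_le_mul_of_nonneg_left (aux_phi_pow hφ0 hφπ h₂) (by positivity)
  have hT3 : ∫ θ in T, S3.indicator G3 θ ≤ 2 ^ |lam| * 2 ^ |κ| * C₃ := by
    rw [integral_indicator measurableSet_Ico, Measure.restrict_restrict measurableSet_Ico]
    have hmono : ∫ θ in S3 ∩ T, G3 θ ≤ ∫ θ in S3, G3 θ := by
      refine setIntegral_mono_set hint3 ?_ (HasSubset.Subset.eventuallyLE inter_subset_left)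
      exact ae_restrict_of_forall_mem measurableSet_Ico fun θ hθ =>
        mul_nonneg hCC0 (Real.rpow_nonneg (le_trans (by linarith) hθ.1) (γ - lam - κ))
    refine hmono.trans ?_
    rcases lt_or_ge (2*φ) (π/4) with h24 | h24
    · have hSval : ∫ θ in S3, G3 θ = ∫ θ in Ioc (2*φ) (π/4), G3 θ := by
        rw [hS3def]
        exact setIntegral_congr_set Ico_ae_eq_Ioc
      rw [hSval, hG3def, MeasureTheory.integral_const_mul]
      have hexp : ∀ θ : ℝ, θ ^ (γ - lam - κ) = θ ^ ((γ + 1 - lam - κ) - 1) := by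
        intro θ; rw [show (γ + 1 - lam - κ) - 1 = γ - lam - κ by ring]
      simp_rw [hexp]
      calc CC * ∫ θ in Ioc (2*φ) (π/4), θ ^ ((γ + 1 - lam - κ) - 1)
          = 2 ^ |lam| * 2 ^ |κ| * (φ ^ (ν + lam) * ∫ θ in Ioc (2*φ) (π/4), θ ^ ((γ + 1 - lam - κ) - 1)) := by
            rw [hCCdef]; ring
        _ ≤ 2 ^ |lam| * 2 ^ |κ| * C₃ :=
            mul_le_mul_of_nonneg_left (hC₃ φ hφ0 hφπ h24) hK₁0
    · have hempty : S3 = (∅ : Set ℝ) := by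
        rw [hS3def]; exact Ico_eq_empty (not_lt.2 h24)
      rw [hempty, setIntegral_empty]
      positivity
  -- put everything together
  calc φ ^ ν * ∫ θ in T, (φ / (θ + φ)) ^ lam * θ ^ γ * |θ - φ| ^ (-κ)
      = ∫ θ in T, φ ^ ν * ((φ / (θ + φ)) ^ lam * θ ^ γ * |θ - φ| ^ (-κ)) :=
        (MeasureTheory.integral_const_mul _ _).symm
    _ ≤ ∫ θ in T, (S1.indicator G1 θ + S2.indicator G2 θ + S3.indicator G3 θ) :=
        integral_mono_of_nonneg hnn ((e1.add e2).add e3)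
          (ae_restrict_of_forall_mem measurableSet_Ioo hcomp)
    _ = (∫ θ in T, S1.indicator G1 θ) + (∫ θ in T, S2.indicator G2 θ)
        + (∫ θ in T, S3.indicator G3 θ) := by
        have e12 : Integrable (fun θ => S1.indicator G1 θ + S2.indicator G2 θ)
            (volume.restrict T) := e1.add e2
        have e3' : Integrable (fun θ => S3.indicator G3 θ) (volume.restrict T) := e3
        have e1' : Integrable (fun θ => S1.indicator G1 θ) (volume.restrict T) := e1
        have e2' : Integrable (fun θ => S2.indicator G2 θ) (volume.restrict T) := e2
        rw [MeasureTheory.integral_add e12 e3', MeasureTheory.integral_add e1' e2']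
    _ ≤ 2 ^ |lam| * 2 ^ |κ| * M / (γ + 1) + 2 * (3 ^ |lam| * 2 ^ |γ|) * M / (1 - κ)
        + 2 ^ |lam| * 2 ^ |κ| * C₃ := by
        gcongr

end
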